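/- Let n ≥ 2, 0 < λ ≤ Λ < ∞, and α ∈ (0,1). The strict inequality (1/2)·trace{ J_α (A₁ + A₂) } < trace{ [ J_α A₁ J_α A₂ ]^{1/2} } holds for every pair of diagonal matrices A₁, A₂ ∈ 𝒜(λ,Λ) if and only if 1 ≤ Λ/λ < (1 + 2√((1−α)/(n−1)))². -/

import Mathlib

open MeasureTheory Matrix

noncomputable section

abbrev EucSp (n : ℕ) := EuclideanSpace ℝ (Fin n)

/-- Principal square root of a positive semidefinite matrix (zero otherwise). -/
noncomputable def msqrt {n : ℕ} (A : Matrix (Fin n) (Fin n) ℝ) : Matrix (Fin n) (Fin n) ℝ :=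
  open scoped Classical in
  if h : A.PosSemidef then
    h.1.eigenvectorUnitary.1 * diagonal (Real.sqrt ∘ h.1.eigenvalues) *
      (star h.1.eigenvectorUnitary : Matrix (Fin n) (Fin n) ℝ) else 0

/-- `A ∈ 𝒜(λ,Λ)`: symmetric and uniformly elliptic. -/
def UnifElliptic {n : ℕ} (lam Lam : ℝ) (A : Matrix (Fin n) (Fin n) ℝ) : Prop :=
  A.IsSymm ∧ ∀ ξ : Fin n → ℝ,
    lam * (ξ ⬝ᵥ ξ) ≤ ξ ⬝ᵥ A.mulVec ξ ∧ ξ ⬝ᵥ A.mulVec ξ ≤ Lam * (ξ ⬝ᵥ ξ)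

/-- Membership in the orthogonal group `O(n)`. -/
def IsOrthMat {n : ℕ} (Q : Matrix (Fin n) (Fin n) ℝ) : Prop :=
  Q * Qᵀ = 1 ∧ Qᵀ * Q = 1

/-- Matrix acting on Euclidean space. -/
noncomputable def mvE {n : ℕ} (M : Matrix (Fin n) (Fin n) ℝ) (y : EucSp n) : EucSp n :=
  (EuclideanSpace.equiv (Fin n) ℝ).symm (M.mulVec ((EuclideanSpace.equiv (Fin n) ℝ) y))

/-- The ellipsoid `x + ε A^{1/2} 𝔹`. -/
noncomputable def ellipsoid {n : ℕ} (ε : ℝ) (M : Matrix (Fin n) (Fin n) ℝ) (x : EucSp n) :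
    Set (EucSp n) :=
  (fun y => x + ε • mvE (msqrt M) y) '' Metric.ball (0 : EucSp n) 1

/-- The matrix `J_α = diag(α-1, 1, …, 1)`. -/
noncomputable def Jmat (n : ℕ) (α : ℝ) : Matrix (Fin n) (Fin n) ℝ :=
  Matrix.diagonal (fun i => if (i : ℕ) = 0 then α - 1 else 1)

/-- Reflection in the first coordinate axis. -/
noncomputable def J0 (n : ℕ) : Matrix (Fin n) (Fin n) ℝ :=
  Matrix.diagonal (fun i => if (i : ℕ) = 0 then -1 else 1)

/-- The first standard basis vector `e₁`. -/
noncomputable def e1 (n : ℕ) : EucSp n :=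
  (EuclideanSpace.equiv (Fin n) ℝ).symm (fun i => if (i : ℕ) = 0 then 1 else 0)

/-- `f₁(x,z) = C|x-z|^α + C̃|x+z|²`. -/
noncomputable def f1 {n : ℕ} (α C Ct : ℝ) (x z : EucSp n) : ℝ :=
  C * ‖x - z‖ ^ α + Ct * ‖x + z‖ ^ 2

/-- The annular step function `f₂`. -/
noncomputable def f2 {n : ℕ} (α C lam ε : ℝ) (N : ℕ) (x z : EucSp n) : ℝ :=
  if ‖x - z‖ / (Real.sqrt lam * ε) > (N : ℝ) then 0
  else C ^ (2 * (2 * N - ⌈2 * ‖x - z‖ / (Real.sqrt lam * ε)⌉₊)) * ε ^ α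

namespace Stmt13Aux

lemma diag_entry_bounds {n : ℕ} {lam Lam : ℝ} {A : Matrix (Fin n) (Fin n) ℝ}
    (hA : UnifElliptic lam Lam A) (i : Fin n) : lam ≤ A i i ∧ A i i ≤ Lam := by
  have h := hA.2 (Pi.single i 1)
  simpa [single_dotProduct, Matrix.mulVec_single] using h

lemma unifElliptic_diagonal {n : ℕ} {lam Lam : ℝ} (d : Fin n → ℝ)
    (h : ∀ i, lam ≤ d i ∧ d i ≤ Lam) : UnifElliptic lam Lam (Matrix.diagonal d) := by
  refine ⟨Matrix.isSymm_diagonal d, fun ξ => ?_⟩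
  have h1 : ξ ⬝ᵥ (Matrix.diagonal d).mulVec ξ = ∑ i, ξ i * (d i * ξ i) := by
    simp [dotProduct, Matrix.mulVec_diagonal]
  have h2 : ∀ c : ℝ, c * (ξ ⬝ᵥ ξ) = ∑ i, c * (ξ i * ξ i) := by
    intro c; simp [dotProduct, Finset.mul_sum]
  constructor
  · rw [h1, h2]
    exact Finset.sum_le_sum fun i _ => by nlinarith [(h i).1, sq_nonneg (ξ i), sq_abs (ξ i)]
  · rw [h1, h2]
    exact Finset.sum_le_sum fun i _ => by nlinarith [(h i).2, sq_nonneg (ξ i)]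

lemma trace_J_mul {n : ℕ} (α : ℝ) (a b : Fin n → ℝ) :
    Matrix.trace (Jmat n α * (Matrix.diagonal a + Matrix.diagonal b)) =
      ∑ i : Fin n, (if (i : ℕ) = 0 then α - 1 else 1) * (a i + b i) := by
  rw [Jmat, Matrix.diagonal_add, Matrix.diagonal_mul_diagonal, Matrix.trace_diagonal]

lemma entry_J_mul {n : ℕ} (α : ℝ) (a b : Fin n → ℝ) (i : Fin n) :
    (Jmat n α * Matrix.diagonal a * (Jmat n α * Matrix.diagonal b)) i i =
      ((if (i : ℕ) = 0 then α - 1 else 1) * a i) *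
        ((if (i : ℕ) = 0 then α - 1 else 1) * b i) := by
  rw [Jmat, Matrix.diagonal_mul_diagonal, Matrix.diagonal_mul_diagonal,
    Matrix.diagonal_mul_diagonal, Matrix.diagonal_apply_eq]

lemma sum_ite_const {n : ℕ} (hn : 2 ≤ n) (c0 c : ℝ) :
    ∑ i : Fin n, (if (i : ℕ) = 0 then c0 else c) = c0 + ((n : ℝ) - 1) * c := by
  haveI : NeZero n := ⟨by omega⟩
  rw [← Finset.add_sum_erase _ _ (Finset.mem_univ (0 : Fin n))]
  have hc : ∀ i ∈ Finset.univ.erase (0 : Fin n),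
      (if (i : ℕ) = 0 then c0 else c) = c := by
    intro i hi
    have hne := Finset.ne_of_mem_erase hi
    rw [if_neg (by intro h; exact hne (Fin.ext (by rw [h]; simp)))]
  rw [Finset.sum_congr rfl hc, Finset.sum_const,
    Finset.card_erase_of_mem (Finset.mem_univ _), Finset.card_univ, Fintype.card_fin,
    nsmul_eq_mul, Nat.cast_sub (by omega), Nat.cast_one]
  simp

lemma sqrt_neg_term {α x y : ℝ} (hα : α < 1) (hx : 0 ≤ x) (hy : 0 ≤ y) :
    Real.sqrt ((α - 1) * x * ((α - 1) * y)) = (1 - α) * (Real.sqrt x * Real.sqrt y) := by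
  rw [show (α - 1) * x * ((α - 1) * y) = ((1 - α) * (1 - α)) * (x * y) by ring,
    Real.sqrt_mul (by nlinarith), Real.sqrt_mul_self (by linarith), Real.sqrt_mul hx]


lemma term_bound {lam Lam x y : ℝ} (hlam : 0 < lam)
    (hx1 : lam ≤ x) (hx2 : x ≤ Lam) (hy1 : lam ≤ y) (hy2 : y ≤ Lam) :
    (x + y) - 2 * (Real.sqrt x * Real.sqrt y) ≤ (Real.sqrt Lam - Real.sqrt lam) ^ 2 := by
  have hx0 : (0:ℝ) ≤ x := le_trans hlam.le hx1
  have hy0 : (0:ℝ) ≤ y := le_trans hlam.le hy1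
  have hsx := Real.sq_sqrt hx0
  have hsy := Real.sq_sqrt hy0
  have h1 : Real.sqrt lam ≤ Real.sqrt x := Real.sqrt_le_sqrt hx1
  have h2 : Real.sqrt x ≤ Real.sqrt Lam := Real.sqrt_le_sqrt hx2
  have h3 : Real.sqrt lam ≤ Real.sqrt y := Real.sqrt_le_sqrt hy1
  have h4 : Real.sqrt y ≤ Real.sqrt Lam := Real.sqrt_le_sqrt hy2
  nlinarith [mul_nonneg (by linarith : (0:ℝ) ≤ (Real.sqrt Lam - Real.sqrt x) + (Real.sqrt y - Real.sqrt lam))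
      (by linarith : (0:ℝ) ≤ (Real.sqrt Lam - Real.sqrt y) + (Real.sqrt x - Real.sqrt lam))]

/-- Forward scalar step: from `m (√Λ - √λ)² < 4 β λ` deduce the distortion bound. -/
lemma scalar_fwd {lam Lam β m : ℝ} (hlam : 0 < lam) (hlL : lam ≤ Lam)
    (hβ : 0 < β) (hm : 1 ≤ m)
    (h : m * (Real.sqrt Lam - Real.sqrt lam) ^ 2 < 4 * β * lam) :
    Lam / lam < (1 + 2 * Real.sqrt (β / m)) ^ 2 := by
  set u := Real.sqrt lam with hu
  set v := Real.sqrt Lam with hv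
  set r := Real.sqrt (β / m) with hr
  have hu0 : 0 < u := Real.sqrt_pos.2 hlam
  have huv : u ≤ v := Real.sqrt_le_sqrt hlL
  have hr0 : 0 ≤ r := Real.sqrt_nonneg _
  have hu2 : u ^ 2 = lam := Real.sq_sqrt hlam.le
  have hv2 : v ^ 2 = Lam := Real.sq_sqrt (le_trans hlam.le hlL)
  have hr2 : m * r ^ 2 = β := by
    rw [hr, Real.sq_sqrt (by positivity)]
    field_simp
  have hm0 : 0 < m := lt_of_lt_of_le one_pos hm
  have step1 : (v - u) ^ 2 < 4 * r ^ 2 * u ^ 2 := by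
    rw [hu2]
    nlinarith
  have step2 : v - u < 2 * r * u := by
    nlinarith [mul_nonneg hr0 hu0.le]
  have step3 : v < u + 2 * r * u := by linarith
  rw [div_lt_iff₀ hlam]
  have h4 : v * v < (u + 2 * r * u) * (u + 2 * r * u) :=
    mul_lt_mul'' step3 step3 (Real.sqrt_nonneg _) (Real.sqrt_nonneg _)
  nlinarith [h4]

/-- Backward scalar step. -/
lemma scalar_bwd {lam Lam β m : ℝ} (hlam : 0 < lam) (hlL : lam ≤ Lam)
    (hβ : 0 < β) (hm : 1 ≤ m)
    (h : Lam / lam < (1 + 2 * Real.sqrt (β / m)) ^ 2) :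
    m * (Real.sqrt Lam - Real.sqrt lam) ^ 2 < 4 * β * lam := by
  set u := Real.sqrt lam with hu
  set v := Real.sqrt Lam with hv
  set r := Real.sqrt (β / m) with hr
  have hu0 : 0 < u := Real.sqrt_pos.2 hlam
  have huv : u ≤ v := Real.sqrt_le_sqrt hlL
  have hr0 : 0 ≤ r := Real.sqrt_nonneg _
  have hu2 : u ^ 2 = lam := Real.sq_sqrt hlam.le
  have hr2 : m * r ^ 2 = β := by
    rw [hr, Real.sq_sqrt (by positivity)]
    field_simp
  have hm0 : 0 < m := lt_of_lt_of_le one_pos hm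
  have hL : Lam < (1 + 2 * r) ^ 2 * lam := by
    rw [div_lt_iff₀ hlam] at h; exact h
  have hvlt : v < (1 + 2 * r) * u := by
    have := Real.sqrt_lt_sqrt (le_trans hlam.le hlL) hL
    rwa [Real.sqrt_mul (by positivity), Real.sqrt_sq (by positivity), ← hu, ← hv] at this
  have step : v - u < 2 * r * u := by linarith
  have hvu0 : 0 ≤ v - u := by linarith
  have : (v - u) ^ 2 < (2 * r * u) ^ 2 := by nlinarith
  calc m * (v - u) ^ 2 < m * (2 * r * u) ^ 2 := by
        exact mul_lt_mul_of_pos_left this hm0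
    _ = 4 * β * lam := by rw [← hr2, ← hu2]; ring

end Stmt13Aux

/-- the diagonal case (Lemma 6.1): the reverse arithmetic-geometric
trace inequality holds for all diagonal matrices in `𝒜(λ,Λ)` iff the distortion
satisfies the stated bound. -/
theorem stmt13 {n : ℕ} (hn : 2 ≤ n)
    (lam Lam : ℝ) (hlam : 0 < lam) (hlL : lam ≤ Lam)
    (α : ℝ) (hα : α ∈ Set.Ioo (0 : ℝ) 1) :
    (∀ A1 A2 : Matrix (Fin n) (Fin n) ℝ,
        UnifElliptic lam Lam A1 → UnifElliptic lam Lam A2 →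
        A1.IsDiag → A2.IsDiag →
        (1 / 2) * Matrix.trace (Jmat n α * (A1 + A2)) <
          ∑ i, Real.sqrt ((Jmat n α * A1 * (Jmat n α * A2)) i i)) ↔
      (1 ≤ Lam / lam ∧
        Lam / lam < (1 + 2 * Real.sqrt ((1 - α) / ((n : ℝ) - 1))) ^ 2) := by
  obtain ⟨hα0, hα1⟩ := hα
  haveI : NeZero n := ⟨by omega⟩
  have hβ : 0 < 1 - α := by linarith
  have hn2 : (2:ℝ) ≤ (n:ℝ) := by exact_mod_cast hn
  have hm : (1:ℝ) ≤ (n:ℝ) - 1 := by linarith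
  have hLam0 : 0 < Lam := lt_of_lt_of_le hlam hlL
  have hsl : Real.sqrt lam * Real.sqrt lam = lam := Real.mul_self_sqrt hlam.le
  constructor
  · intro H
    refine ⟨(one_le_div hlam).2 hlL, ?_⟩
    set d1 : Fin n → ℝ := fun i => if (i : ℕ) = 0 then lam else Lam with hd1
    set d2 : Fin n → ℝ := fun _ => lam with hd2
    have hb1 : ∀ i, lam ≤ d1 i ∧ d1 i ≤ Lam := fun i => by
      by_cases h : (i : ℕ) = 0 <;> simp only [hd1, h, if_true, if_false, eq_self_iff_true] <;>
          exact ⟨by linarith, by linarith⟩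
    have hb2 : ∀ i, lam ≤ d2 i ∧ d2 i ≤ Lam := fun i => ⟨le_refl _, hlL⟩
    have key := H (Matrix.diagonal d1) (Matrix.diagonal d2)
      (Stmt13Aux.unifElliptic_diagonal d1 hb1) (Stmt13Aux.unifElliptic_diagonal d2 hb2)
      (Matrix.isDiag_diagonal d1) (Matrix.isDiag_diagonal d2)
    rw [Stmt13Aux.trace_J_mul] at key
    have hL : ∑ i : Fin n, (if (i : ℕ) = 0 then α - 1 else 1) * (d1 i + d2 i)
        = ((α - 1) * (lam + lam)) + ((n : ℝ) - 1) * (Lam + lam) := by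
      rw [Finset.sum_congr rfl (fun (i : Fin n) (_ : i ∈ Finset.univ) =>
        show (if (i : ℕ) = 0 then α - 1 else 1) * (d1 i + d2 i)
          = (if (i : ℕ) = 0 then (α - 1) * (lam + lam) else Lam + lam) by
        by_cases h : (i : ℕ) = 0 <;> simp only [hd1, hd2, h, if_true, if_false, eq_self_iff_true, one_mul]),
        Stmt13Aux.sum_ite_const hn]
    have hR : ∑ i : Fin n,
        Real.sqrt ((Jmat n α * Matrix.diagonal d1 * (Jmat n α * Matrix.diagonal d2)) i i)
        = ((1 - α) * lam) + ((n : ℝ) - 1) * (Real.sqrt Lam * Real.sqrt lam) := by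
      rw [Finset.sum_congr rfl (fun i (_ : i ∈ Finset.univ) => ?_), Stmt13Aux.sum_ite_const hn]
      rw [Stmt13Aux.entry_J_mul]
      by_cases h : (i : ℕ) = 0
      · simp only [h, if_true, eq_self_iff_true]
        rw [show d1 i = lam by simp only [hd1, h, if_true, eq_self_iff_true], show d2 i = lam by simp [hd2]]
        rw [Stmt13Aux.sqrt_neg_term hα1 hlam.le hlam.le, hsl]
      · simp only [h, if_false]
        rw [show d1 i = Lam by simp only [hd1, h, if_false], show d2 i = lam by simp [hd2], one_mul, one_mul]
        exact Real.sqrt_mul hLam0.le lam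
    rw [hL, hR] at key
    have hu2 : Real.sqrt lam ^ 2 = lam := Real.sq_sqrt hlam.le
    have hv2 : Real.sqrt Lam ^ 2 = Lam := Real.sq_sqrt hLam0.le
    have hnum : ((n : ℝ) - 1) * (Real.sqrt Lam - Real.sqrt lam) ^ 2 < 4 * (1 - α) * lam := by
      nlinarith [key]
    exact Stmt13Aux.scalar_fwd hlam hlL hβ hm hnum
  · rintro ⟨-, h2⟩ A1 A2 hE1 hE2 hD1 hD2
    have hnum := Stmt13Aux.scalar_bwd hlam hlL hβ hm h2
    have hba : ∀ i, lam ≤ A1.diag i ∧ A1.diag i ≤ Lam := fun i =>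
      Stmt13Aux.diag_entry_bounds hE1 i
    have hbb : ∀ i, lam ≤ A2.diag i ∧ A2.diag i ≤ Lam := fun i =>
      Stmt13Aux.diag_entry_bounds hE2 i
    rw [← hD1.diagonal_diag, ← hD2.diagonal_diag]
    set a := A1.diag with hadef
    set b := A2.diag with hbdef
    have ha0 : ∀ i, (0:ℝ) ≤ a i := fun i => le_trans hlam.le (hba i).1
    have hb0 : ∀ i, (0:ℝ) ≤ b i := fun i => le_trans hlam.le (hbb i).1
    rw [Stmt13Aux.trace_J_mul]
    have hR : ∀ i : Fin n,
        Real.sqrt ((Jmat n α * Matrix.diagonal a * (Jmat n α * Matrix.diagonal b)) i i)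
        = (if (i : ℕ) = 0 then (1 - α) * (Real.sqrt (a i) * Real.sqrt (b i))
            else Real.sqrt (a i) * Real.sqrt (b i)) := by
      intro i
      rw [Stmt13Aux.entry_J_mul]
      by_cases h : (i : ℕ) = 0
      · simp only [h, if_true, eq_self_iff_true]
        exact Stmt13Aux.sqrt_neg_term hα1 (ha0 i) (hb0 i)
      · simp only [h, if_false, one_mul]
        exact Real.sqrt_mul (ha0 i) _
    rw [Finset.sum_congr rfl (fun i _ => hR i)]
    rw [← Finset.add_sum_erase _ _ (Finset.mem_univ (0 : Fin n)),
      ← Finset.add_sum_erase _ _ (Finset.mem_univ (0 : Fin n))]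
    simp only [Fin.val_zero, eq_self_iff_true, if_true]
    have hne : ∀ i ∈ Finset.univ.erase (0 : Fin n), ¬ ((i : ℕ) = 0) := by
      intro i hi
      have hne := Finset.ne_of_mem_erase hi
      intro h; exact hne (Fin.ext (by rw [h]; simp))
    rw [Finset.sum_congr rfl (fun (i : Fin n) hi =>
        show (if (i : ℕ) = 0 then α - 1 else 1) * (a i + b i) = a i + b i by
          rw [if_neg (hne i hi), one_mul]),
      Finset.sum_congr rfl (fun (i : Fin n) hi =>
        show (if (i : ℕ) = 0 then (1 - α) * (Real.sqrt (a i) * Real.sqrt (b i))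
            else Real.sqrt (a i) * Real.sqrt (b i)) = Real.sqrt (a i) * Real.sqrt (b i) by
          rw [if_neg (hne i hi)])]
    have hS : (∑ i ∈ Finset.univ.erase (0 : Fin n), (a i + b i))
        - 2 * ∑ i ∈ Finset.univ.erase (0 : Fin n), Real.sqrt (a i) * Real.sqrt (b i)
        ≤ ((n : ℝ) - 1) * (Real.sqrt Lam - Real.sqrt lam) ^ 2 := by
      have h := Finset.sum_le_sum (fun i (hi : i ∈ Finset.univ.erase (0 : Fin n)) =>
        Stmt13Aux.term_bound hlam (hba i).1 (hba i).2 (hbb i).1 (hbb i).2)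
      rw [Finset.sum_sub_distrib, ← Finset.mul_sum, Finset.sum_const,
        Finset.card_erase_of_mem (Finset.mem_univ _), Finset.card_univ, Fintype.card_fin,
        nsmul_eq_mul, Nat.cast_sub (by omega), Nat.cast_one] at h
      exact h
    have hgm : lam ≤ Real.sqrt (a 0) * Real.sqrt (b 0) := by
      calc lam = Real.sqrt lam * Real.sqrt lam := hsl.symm
        _ ≤ Real.sqrt (a 0) * Real.sqrt (b 0) :=
          mul_le_mul (Real.sqrt_le_sqrt (hba 0).1) (Real.sqrt_le_sqrt (hbb 0).1)
            (Real.sqrt_nonneg _) (Real.sqrt_nonneg _)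
    have h0 : 2 * (1 - α) * lam ≤ (1 - α) * (Real.sqrt (a 0) * Real.sqrt (b 0))
        + (1 - α) * (a 0 + b 0) / 2 := by
      nlinarith [(hba 0).1, (hbb 0).1]
    linarith [hS, hnum, h0]

end
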